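/- Let F be a linearly ordered field and let 𝓛 = {L_1, …, L_d} be a set of d ≥ 1 distinct lines in F², L_i the zero set of an affine function f_i(x,y) = a_i·x + b_i·y − c_i with (a_i,b_i) ≠ (0,0); parallel lines and concurrencies are allowed. Let P be the (finite) set of points lying on at least two of the lines, and for p ∈ P let k_p = #{i : p ∈ L_i}. Partition {1, …, d} into parallel classes (i and j in the same class iff a_i·b_j = a_j·b_i) of sizes l_1, …, l_r. Then the number of regions of 𝓛 equals 1 + d + C(d,2) − Σ_{p ∈ P} C(k_p − 1, 2) − Σ_{t=1}^{r} C(l_t, 2). (Count of regions of the complement of the zero set of a polynomial in two variables that factors completely into linear factors, in terms of the degree d of its reduced polynomial, the orders of vanishing k_p, and the parallel class sizes l_t.) -/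

import Mathlib

/-- The affine functional `p ↦ a i * p.1 + b i * p.2 - c i` cutting out the `i`-th line. -/
def arrLine {F : Type*} [Field F] [LinearOrder F] [IsStrictOrderedRing F] {d : ℕ} (a b c : Fin d → F)
    (i : Fin d) (p : F × F) : F :=
  a i * p.1 + b i * p.2 - c i

/-- The open region of the family of lines associated to the sign vector `ε`
(`true ↦ +1`, `false ↦ -1`). -/
def arrRegion {F : Type*} [Field F] [LinearOrder F] [IsStrictOrderedRing F] {d : ℕ} (a b c : Fin d → F)
    (ε : Fin d → Bool) : Set (F × F) :=
  {p : F × F | ∀ i : Fin d, 0 < (if ε i then (1 : F) else -1) * arrLine a b c i p}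

namespace LineFold
variable {F : Type*} [Field F] [LinearOrder F] [IsStrictOrderedRing F] {d : ℕ}

def cross (a b : Fin d → F) (i j : Fin d) : F := a i * b j - a j * b i

def pt (a b c : Fin d → F) (i j : Fin d) : F × F :=
  ((c i * b j - c j * b i) / cross a b i j, (a i * c j - a j * c i) / cross a b i j)

lemma pt_mem (a b c : Fin d → F) {i j : Fin d} (h : cross a b i j ≠ 0) :
    arrLine a b c i (pt a b c i j) = 0 ∧ arrLine a b c j (pt a b c i j) = 0 := by
  unfold arrLine pt
  constructor <;> (field_simp; unfold cross; ring)

lemma pt_unique (a b c : Fin d → F) {i j : Fin d} (h : cross a b i j ≠ 0) {p : F × F}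
    (h1 : arrLine a b c i p = 0) (h2 : arrLine a b c j p = 0) : p = pt a b c i j := by
  unfold arrLine at h1 h2
  have hx : p.1 = (c i * b j - c j * b i) / cross a b i j := by
    field_simp
    unfold cross
    linear_combination (b j) * h1 - (b i) * h2
  have hy : p.2 = (a i * c j - a j * c i) / cross a b i j := by
    field_simp
    unfold cross
    linear_combination (a i) * h2 - (a j) * h1
  unfold pt
  exact Prod.ext hx hy

lemma parallel_smul (a b c : Fin d → F) (hnd : ∀ i : Fin d, (a i, b i) ≠ (0, 0))
    {i j : Fin d} (hij : cross a b i j = 0) {p : F × F}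
    (hi : arrLine a b c i p = 0) (hj : arrLine a b c j p = 0) :
    ∃ l : F, l ≠ 0 ∧ ∀ q, arrLine a b c j q = l * arrLine a b c i q := by
  unfold cross at hij
  unfold arrLine at hi hj ⊢
  rcases eq_or_ne (a i) 0 with ha | ha
  · have hb : b i ≠ 0 := by
      intro hb; exact hnd i (by rw [ha, hb])
    have haj : a j = 0 := by
      have : a j * b i = 0 := by linear_combination -hij + b j * ha
      rcases mul_eq_zero.1 this with h' | h'
      · exact h'
      · exact absurd h' hb
    have hbj : b j ≠ 0 := by
      intro hb'; exact hnd j (by rw [haj, hb'])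
    refine ⟨b j / b i, div_ne_zero hbj hb, fun q => ?_⟩
    have hc : c j = b j / b i * c i := by
      field_simp
      linear_combination b j * hi - b i * hj - p.1 * hij
    rw [hc, ha, haj]
    field_simp
    ring
  · have haj : a j ≠ 0 := by
      intro haj
      have : a i * b j = 0 := by linear_combination hij + b i * haj
      rcases mul_eq_zero.1 this with h' | h'
      · exact absurd h' ha
      · exact hnd j (by rw [haj, h'])
    refine ⟨a j / a i, div_ne_zero haj ha, fun q => ?_⟩
    have hbj : b j = a j / a i * b i := by
      field_simp; linear_combination hij
    have hc : c j = a j / a i * c i := by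
      field_simp
      linear_combination a j * hi - a i * hj + p.2 * hij
    rw [hbj, hc]
    field_simp

lemma parallel_eq (a b c : Fin d → F) (hnd : ∀ i : Fin d, (a i, b i) ≠ (0, 0))
    (hdistinct : ∀ i j : Fin d,
      {p : F × F | arrLine a b c i p = 0} = {p : F × F | arrLine a b c j p = 0} → i = j)
    {i j : Fin d} (hij : cross a b i j = 0) {p : F × F}
    (hi : arrLine a b c i p = 0) (hj : arrLine a b c j p = 0) : i = j := by
  obtain ⟨l, hl, hlf⟩ := parallel_smul a b c hnd hij hi hj
  apply hdistinct
  ext q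
  simp only [Set.mem_setOf_eq, hlf q, mul_eq_zero]
  tauto


variable {F : Type*} [Field F] [LinearOrder F] [IsStrictOrderedRing F] {m : ℕ}

open Classical in
noncomputable def cuts (α δ : Fin m → F) : Finset F :=
  (Finset.univ.filter (fun i => δ i ≠ 0)).image (fun i => -α i / δ i)

open Classical in
noncomputable def psi (α δ : Fin m → F) (t : F) : ℕ :=
  ((cuts α δ).filter (· < t)).card

open Classical

lemma valid_iff (α δ : Fin m → F) (h0 : ∀ i, δ i = 0 → α i ≠ 0) (t : F) :
    (∀ i, α i + t * δ i ≠ 0) ↔ t ∉ cuts α δ := by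
  constructor
  · intro hv ht
    simp only [cuts, Finset.mem_image, Finset.mem_filter, Finset.mem_univ, true_and] at ht
    obtain ⟨i, hi, hti⟩ := ht
    apply hv i
    rw [← hti]; field_simp; ring
  · intro ht i hi
    rcases eq_or_ne (δ i) 0 with h | h
    · exact h0 i h (by rwa [h, mul_zero, add_zero] at hi)
    · apply ht
      simp only [cuts, Finset.mem_image, Finset.mem_filter, Finset.mem_univ, true_and]
      exact ⟨i, h, by field_simp; linear_combination -hi⟩

lemma psi_le (α δ : Fin m → F) (t : F) : psi α δ t ≤ (cuts α δ).card :=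
  Finset.card_le_card (Finset.filter_subset _ _)

lemma sign_transfer {e u w : F} (hu : u ≠ 0) (hw : w ≠ 0) (hs : 0 < u ↔ 0 < w) :
    (0 < e * u ↔ 0 < e * w) := by
  have hneg : u < 0 ↔ w < 0 := by
    constructor
    · intro h; rcases lt_trichotomy w 0 with q|q|q
      · exact q
      · exact absurd q hw
      · exact absurd (hs.2 q) (not_lt.2 h.le)
    · intro h; rcases lt_trichotomy u 0 with q|q|q
      · exact q
      · exact absurd q hu
      · exact absurd (hs.1 q) (not_lt.2 h.le)
  rw [mul_pos_iff, mul_pos_iff]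
  constructor
  · rintro (⟨h1, h2⟩ | ⟨h1, h2⟩)
    · exact Or.inl ⟨h1, hs.1 h2⟩
    · exact Or.inr ⟨h1, hneg.1 h2⟩
  · rintro (⟨h1, h2⟩ | ⟨h1, h2⟩)
    · exact Or.inl ⟨h1, hs.2 h2⟩
    · exact Or.inr ⟨h1, hneg.2 h2⟩

/-- same psi value means same side of every cut -/
lemma side_of_psi_eq {α δ : Fin m → F} {t t' : F} (ht : t ∉ cuts α δ) (ht' : t' ∉ cuts α δ)
    (h : psi α δ t = psi α δ t') : ∀ x ∈ cuts α δ, (t < x ↔ t' < x) := by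
  have aux : ∀ u v : F, u ∉ cuts α δ → v ∉ cuts α δ → ∀ x ∈ cuts α δ, u < x → x < v →
      psi α δ u < psi α δ v := by
    intro u v hu hv x hx hux hxv
    have hsub : insert x ((cuts α δ).filter (· < u)) ⊆ (cuts α δ).filter (· < v) := by
      intro y hy
      rcases Finset.mem_insert.1 hy with rfl | hy
      · exact Finset.mem_filter.2 ⟨hx, hxv⟩
      · have := Finset.mem_filter.1 hy
        exact Finset.mem_filter.2 ⟨this.1, lt_trans this.2 (lt_trans hux hxv)⟩
    have hni : x ∉ (cuts α δ).filter (· < u) := by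
      simp only [Finset.mem_filter]
      rintro ⟨-, hxu⟩
      exact absurd (lt_trans hxu hux) (lt_irrefl x)
    calc psi α δ u < psi α δ u + 1 := Nat.lt_succ_self _
    _ = (insert x ((cuts α δ).filter (· < u))).card := (Finset.card_insert_of_notMem hni).symm
    _ ≤ _ := Finset.card_le_card hsub
  intro x hx
  constructor
  · intro htx
    by_contra h'
    have hxt' : x < t' := lt_of_le_of_ne (not_lt.1 h') (fun he => ht' (he ▸ hx))
    exact absurd h (Nat.ne_of_lt (aux t t' ht ht' x hx htx hxt'))
  · intro htx
    by_contra h'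
    have hxt : x < t := lt_of_le_of_ne (not_lt.1 h') (fun he => ht (he ▸ hx))
    exact absurd h.symm (Nat.ne_of_lt (aux t' t ht' ht x hx htx hxt))

/-- psi equal implies same sign vector -/
lemma sign_eq_of_psi_eq {α δ : Fin m → F} {t t' : F}
    (hv : ∀ i, α i + t * δ i ≠ 0) (hv' : ∀ i, α i + t' * δ i ≠ 0)
    (ht : t ∉ cuts α δ) (ht' : t' ∉ cuts α δ)
    (h : psi α δ t = psi α δ t') :
    ∀ i, decide (0 < α i + t * δ i) = decide (0 < α i + t' * δ i) := by
  intro i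
  rcases eq_or_ne (δ i) 0 with hd | hd
  · simp [hd]
  · set x : F := -α i / δ i with hxdef
    have hxc : x ∈ cuts α δ := by
      simp only [cuts, Finset.mem_image, Finset.mem_filter, Finset.mem_univ, true_and]
      exact ⟨i, hd, rfl⟩
    have hfac : ∀ s : F, α i + s * δ i = δ i * (s - x) := by
      intro s; rw [hxdef]; field_simp; ring
    have hside := side_of_psi_eq ht ht' h x hxc
    have htx : t ≠ x := fun he => ht (he ▸ hxc)
    have htx' : t' ≠ x := fun he => ht' (he ▸ hxc)
    have hsgn : (0 < t - x ↔ 0 < t' - x) := by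
      rw [sub_pos, sub_pos]
      constructor
      · intro h1
        have hnl : ¬ t' < x := fun h2 => absurd (hside.2 h2) (not_lt.2 h1.le)
        exact lt_of_le_of_ne (not_lt.1 hnl) (Ne.symm htx')
      · intro h1
        have hnl : ¬ t < x := fun h2 => absurd (hside.1 h2) (not_lt.2 h1.le)
        exact lt_of_le_of_ne (not_lt.1 hnl) (Ne.symm htx)
    have hne : t - x ≠ 0 := sub_ne_zero.2 htx
    have hne' : t' - x ≠ 0 := sub_ne_zero.2 htx'
    rw [hfac t, hfac t']
    simp only [decide_eq_decide]
    exact sign_transfer hne hne' hsgn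

/-- same sign vector implies psi equal -/
lemma psi_eq_of_sign_eq {α δ : Fin m → F} {t t' : F}
    (hv : ∀ i, α i + t * δ i ≠ 0) (hv' : ∀ i, α i + t' * δ i ≠ 0)
    (h : ∀ i, decide (0 < α i + t * δ i) = decide (0 < α i + t' * δ i)) :
    psi α δ t = psi α δ t' := by
  have hside : ∀ x ∈ cuts α δ, (x < t ↔ x < t') := by
    intro x hx
    simp only [cuts, Finset.mem_image, Finset.mem_filter, Finset.mem_univ, true_and] at hx
    obtain ⟨i, hd, rfl⟩ := hx
    have hfac : ∀ s : F, α i + s * δ i = δ i * (s - (-α i / δ i)) := by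
      intro s; field_simp; ring
    have hi := h i
    rw [hfac t, hfac t'] at hi
    simp only [decide_eq_decide] at hi
    have h1 : δ i * (t - (-α i / δ i)) ≠ 0 := by rw [← hfac t]; exact hv i
    have h2 : δ i * (t' - (-α i / δ i)) ≠ 0 := by rw [← hfac t']; exact hv' i
    have h3 := sign_transfer (e := (δ i)⁻¹) h1 h2 hi
    rw [inv_mul_cancel_left₀ hd, inv_mul_cancel_left₀ hd] at h3
    rw [← sub_pos, ← sub_pos (a := t')]
    exact h3
  unfold psi
  congr 1
  apply Finset.filter_congr
  intro x hx
  simp only [hside x hx]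



open Classical

lemma card_filter_fin_lt (m n : ℕ) (h : n ≤ m) :
    ((Finset.univ : Finset (Fin m)).filter (fun k => k.val < n)).card = n := by
  have e : ((Finset.univ : Finset (Fin m)).filter (fun k => k.val < n)).card
      = (Finset.range n).card := by
    apply Finset.card_bij (i := fun (k : Fin m) _ => (k : ℕ))
    · intro k hk
      simp only [Finset.mem_filter] at hk
      exact Finset.mem_range.2 hk.2
    · intro k1 _ k2 _ he
      exact Fin.val_injective he
    · intro x hx
      have hxm : x < m := lt_of_lt_of_le (Finset.mem_range.1 hx) h
      exact ⟨⟨x, hxm⟩, by simp [Finset.mem_range.1 hx], rfl⟩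
  rw [e, Finset.card_range]

noncomputable def rep (S : Finset F) (n : ℕ) : F :=
  if hn : S.Nonempty then
    if n = 0 then S.min' hn - 1
    else if hl : n < S.card then
      (S.orderEmbOfFin rfl ⟨n - 1, by omega⟩ + S.orderEmbOfFin rfl ⟨n, hl⟩) / 2
    else S.max' hn + 1
  else 0

lemma rep_spec (S : Finset F) (n : ℕ) (hn : n ≤ S.card) :
    rep S n ∉ S ∧ (S.filter (· < rep S n)).card = n := by
  classical
  rcases S.eq_empty_or_nonempty with rfl | hne
  · simp at hn
    simp [rep, hn]
  · have hcardpos : 0 < S.card := Finset.card_pos.2 hne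
    set f := S.orderEmbOfFin (rfl : S.card = S.card) with hf
    have hmemf : ∀ k, f k ∈ S := fun k => Finset.orderEmbOfFin_mem S rfl k
    have hsurj : ∀ x ∈ S, ∃ k, f k = x := by
      intro x hx
      have : x ∈ Set.range f := by rw [Finset.range_orderEmbOfFin]; exact hx
      exact this
    have hfilter : ∀ t : F, (S.filter (· < t)).card
        = (Finset.univ.filter (fun k : Fin S.card => f k < t)).card := by
      intro t
      refine (Finset.card_bij
        (fun (k : Fin S.card) (_ : k ∈ Finset.univ.filter fun k => f k < t) => (f k : F))
        ?_ ?_ ?_).symm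
      · intro k hk
        simp only [Finset.mem_filter, Finset.mem_univ, true_and] at hk ⊢
        exact ⟨hmemf k, hk⟩
      · intro k1 _ k2 _ he
        exact f.injective he
      · intro x hx
        simp only [Finset.mem_filter] at hx
        obtain ⟨k, rfl⟩ := hsurj x hx.1
        exact ⟨k, by simp [Finset.mem_filter, hx.2], rfl⟩
    rcases Nat.eq_zero_or_pos n with rfl | hnpos
    · have hrep : rep S 0 = S.min' hne - 1 := by simp [rep, hne]
      constructor
      · rw [hrep]; intro hmem
        have := S.min'_le _ hmem
        linarith
      · rw [hrep, Finset.card_eq_zero, Finset.filter_eq_empty_iff]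
        intro x hx
        have := S.min'_le x hx
        simp only [not_lt]
        linarith
    · rcases eq_or_lt_of_le hn with rfl | hlt
      · have hrep : rep S S.card = S.max' hne + 1 := by
          have h0 : S.card ≠ 0 := Nat.pos_iff_ne_zero.1 hcardpos
          simp [rep, hne, h0]
        have hfull : S.filter (· < rep S S.card) = S := by
          rw [hrep]
          apply Finset.filter_true_of_mem
          intro x hx
          have := S.le_max' x hx
          linarith
        constructor
        · rw [hrep]; intro hmem
          have := S.le_max' _ hmem
          linarith
        · rw [hfull]
      · -- 0 < n < S.card
        have hrep : rep S n = (f ⟨n - 1, by omega⟩ + f ⟨n, hlt⟩) / 2 := by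
          have h0 : n ≠ 0 := Nat.pos_iff_ne_zero.1 hnpos
          simp [rep, hne, h0, hlt, hf]
        have hlt12 : f ⟨n - 1, by omega⟩ < f ⟨n, hlt⟩ := by
          apply f.strictMono
          simp only [Fin.lt_def]; omega
        have hmid1 : f ⟨n - 1, by omega⟩ < rep S n := by
          rw [hrep]; exact left_lt_add_div_two.2 hlt12
        have hmid2 : rep S n < f ⟨n, hlt⟩ := by
          rw [hrep]; exact add_div_two_lt_right.2 hlt12
        have hkey : ∀ k : Fin S.card, (f k < rep S n ↔ (k : ℕ) < n) := by
          intro k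
          constructor
          · intro hk
            have h1 : f k < f ⟨n, hlt⟩ := lt_trans hk hmid2
            have := f.lt_iff_lt.1 h1
            simpa [Fin.lt_def] using this
          · intro hk
            have hkle : k ≤ (⟨n - 1, by omega⟩ : Fin S.card) := by
              simp only [Fin.le_def]; omega
            calc f k ≤ f ⟨n - 1, by omega⟩ := f.le_iff_le.2 hkle
            _ < rep S n := hmid1
        constructor
        · intro hmem
          obtain ⟨k, hk⟩ := hsurj _ hmem
          have h1f : f k < f ⟨n, hlt⟩ := by rw [hk]; exact hmid2
          have h1 : (k : ℕ) < n := by simpa [Fin.lt_def] using f.lt_iff_lt.1 h1f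
          have h2 : (⟨n - 1, by omega⟩ : Fin S.card) < k := by
            rw [← f.lt_iff_lt, hk]
            exact hmid1
          simp only [Fin.lt_def] at h2
          omega
        · rw [hfilter]
          have e2 : (Finset.univ.filter (fun k : Fin S.card => f k < rep S n))
              = Finset.univ.filter (fun k : Fin S.card => (k : ℕ) < n) :=
            Finset.filter_congr (fun k _ => by
              constructor
              · exact (hkey k).1
              · exact (hkey k).2)
          rw [e2, card_filter_fin_lt _ _ (le_of_lt hlt)]


open Classical in
lemma oneD {m : ℕ} (α δ : Fin m → F) (h0 : ∀ i, δ i = 0 → α i ≠ 0) :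
    (Finset.univ.filter (fun ε : Fin m → Bool =>
      ∃ t : F, (∀ i, α i + t * δ i ≠ 0) ∧ ∀ i, ε i = decide (0 < α i + t * δ i))).card
    = (cuts α δ).card + 1 := by
  classical
  have e : (Finset.univ.filter (fun ε : Fin m → Bool =>
      ∃ t : F, (∀ i, α i + t * δ i ≠ 0) ∧ ∀ i, ε i = decide (0 < α i + t * δ i))).card
      = (Finset.range ((cuts α δ).card + 1)).card := by
    apply Finset.card_bij (i := fun ε hε =>
      psi α δ (((Finset.mem_filter.1 hε).2).choose))
    · intro ε hε
      exact Finset.mem_range.2 (Nat.lt_succ_of_le (psi_le α δ _))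
    · intro ε1 h1 ε2 h2 he
      have s1 := ((Finset.mem_filter.1 h1).2).choose_spec
      have s2 := ((Finset.mem_filter.1 h2).2).choose_spec
      have hv1 := s1.1
      have hv2 := s2.1
      have hsg := sign_eq_of_psi_eq hv1 hv2
        ((valid_iff α δ h0 _).1 hv1) ((valid_iff α δ h0 _).1 hv2) he
      funext i
      rw [s1.2 i, s2.2 i, hsg i]
    · intro n hn
      have hn' : n ≤ (cuts α δ).card := Nat.lt_succ_iff.1 (Finset.mem_range.1 hn)
      obtain ⟨hnotmem, hcard⟩ := rep_spec (cuts α δ) n hn'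
      have hvalid : ∀ i, α i + rep (cuts α δ) n * δ i ≠ 0 :=
        (valid_iff α δ h0 _).2 hnotmem
      set εn : Fin m → Bool := fun i => decide (0 < α i + rep (cuts α δ) n * δ i) with hεn
      have hmem : εn ∈ Finset.univ.filter (fun ε : Fin m → Bool =>
          ∃ t : F, (∀ i, α i + t * δ i ≠ 0) ∧ ∀ i, ε i = decide (0 < α i + t * δ i)) :=
        Finset.mem_filter.2 ⟨Finset.mem_univ _, ⟨rep (cuts α δ) n, hvalid, fun i => rfl⟩⟩
      refine ⟨εn, hmem, ?_⟩
      have hspec := ((Finset.mem_filter.1 hmem).2).choose_spec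
      have heq : psi α δ ((Finset.mem_filter.1 hmem).2).choose
          = psi α δ (rep (cuts α δ) n) :=
        psi_eq_of_sign_eq hspec.1 hvalid (fun i => (hspec.2 i).symm)
      rw [heq]
      unfold psi
      convert hcard using 2
  rw [e, Finset.card_range]



lemma sg_iff {e : Bool} {u : F} (hu : u ≠ 0) :
    (0 < (if e then (1 : F) else -1) * u) ↔ e = decide (0 < u) := by
  cases e <;> simp
  · exact ⟨le_of_lt, fun h => lt_of_le_of_ne h hu⟩

lemma line_affine (a b c : Fin d → F) (i : Fin d) (x y : F × F) (s : F) :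
    arrLine a b c i (x.1 + s * (y.1 - x.1), x.2 + s * (y.2 - x.2))
      = (1 - s) * arrLine a b c i x + s * arrLine a b c i y := by
  simp only [arrLine]; ring

lemma mem_region_combo (a b c : Fin d → F) (ε : Fin d → Bool) {x y : F × F}
    (hx : x ∈ arrRegion a b c ε) (hy : y ∈ arrRegion a b c ε) {s : F}
    (h0 : 0 < s) (h1 : s < 1) :
    (x.1 + s * (y.1 - x.1), x.2 + s * (y.2 - x.2)) ∈ arrRegion a b c ε := by
  intro i
  rw [show (if ε i then (1:F) else -1) * arrLine a b c i (x.1 + s * (y.1 - x.1), x.2 + s * (y.2 - x.2))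
      = (1 - s) * ((if ε i then (1:F) else -1) * arrLine a b c i x)
        + s * ((if ε i then (1:F) else -1) * arrLine a b c i y) by
    rw [line_affine]; ring]
  have := hx i
  have := hy i
  have hs1 : (0:F) < 1 - s := by linarith
  positivity

/-- intermediate value: an affine functional taking both signs on a region vanishes there -/
lemma ivt_region (a b c : Fin d → F) (ε : Fin d → Bool) (u v w : F) {x y : F × F}
    (hx : x ∈ arrRegion a b c ε) (hy : y ∈ arrRegion a b c ε)
    (hgx : u * x.1 + v * x.2 - w < 0) (hgy : 0 < u * y.1 + v * y.2 - w) :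
    ∃ z ∈ arrRegion a b c ε, u * z.1 + v * z.2 - w = 0 := by
  set gx := u * x.1 + v * x.2 - w with hgxd
  set gy := u * y.1 + v * y.2 - w with hgyd
  have hd : 0 < gy - gx := by linarith
  set s : F := -gx / (gy - gx) with hs
  have hs0 : 0 < s := div_pos (by linarith) hd
  have hs1 : s < 1 := by
    rw [hs, div_lt_one hd]; linarith
  refine ⟨(x.1 + s * (y.1 - x.1), x.2 + s * (y.2 - x.2)),
    mem_region_combo a b c ε hx hy hs0 hs1, ?_⟩
  have : u * (x.1 + s * (y.1 - x.1)) + v * (x.2 + s * (y.2 - x.2)) - w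
      = (1 - s) * gx + s * gy := by rw [hgxd, hgyd]; ring
  rw [this, hs]
  field_simp
  ring


open Classical in
lemma perturb (a b c : Fin d → F) (ε : Fin d → Bool) {x : F × F}
    (hx : x ∈ arrRegion a b c ε) (u v : F) :
    ∃ e : F, 0 < e ∧ ∀ e' : F, |e'| ≤ e →
      (x.1 + e' * u, x.2 + e' * v) ∈ arrRegion a b c ε := by
  classical
  set T : Finset F := insert 1 (Finset.univ.image (fun i : Fin d =>
    ((if ε i then (1:F) else -1) * arrLine a b c i x)
      / (1 + |(if ε i then (1:F) else -1) * (a i * u + b i * v)|) / 2)) with hT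
  have hTne : T.Nonempty := Finset.insert_nonempty _ _
  have hpos : ∀ y ∈ T, 0 < y := by
    intro y hy
    rw [hT, Finset.mem_insert] at hy
    rcases hy with rfl | hy
    · exact one_pos
    · obtain ⟨i, -, rfl⟩ := Finset.mem_image.1 hy
      have h1 := hx i
      have h2 : (0:F) < 1 + |(if ε i then (1:F) else -1) * (a i * u + b i * v)| := by positivity
      positivity
  have hmpos : 0 < T.min' hTne := hpos _ (T.min'_mem hTne)
  refine ⟨T.min' hTne, hmpos, ?_⟩
  intro e' he' i
  set sg : F := if ε i then (1:F) else -1 with hsg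
  set pos : F := sg * arrLine a b c i x with hposd
  set cc : F := sg * (a i * u + b i * v) with hccd
  have hkey : sg * arrLine a b c i (x.1 + e' * u, x.2 + e' * v) = pos + e' * cc := by
    rw [hposd, hccd]; simp only [arrLine]; ring
  rw [hkey]
  have hpi : 0 < pos := hx i
  have hL : (0:F) ≤ |cc| := abs_nonneg _
  have h1 : (0:F) < 1 + |cc| := by positivity
  have hmle : T.min' hTne ≤ pos / (1 + |cc|) / 2 := by
    apply Finset.min'_le
    rw [hT]
    exact Finset.mem_insert_of_mem (Finset.mem_image_of_mem _ (Finset.mem_univ i))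
  have h2 : T.min' hTne * (2 * (1 + |cc|)) ≤ pos := by
    have he : pos / (1 + |cc|) / 2 = pos / (2 * (1 + |cc|)) := by
      rw [div_div]; ring_nf
    rw [he, le_div_iff₀ (by positivity)] at hmle
    exact hmle
  have h3 : -(|e'| * |cc|) ≤ e' * cc := by
    rw [← abs_mul]
    exact neg_abs_le _
  have h4 : |e'| * |cc| ≤ T.min' hTne * |cc| :=
    mul_le_mul_of_nonneg_right he' hL
  nlinarith [hmpos, h2, h3, h4]

open Classical in
noncomputable def newpts (a b c : Fin d → F) (j : Fin d) : Finset (F × F) :=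
  (Finset.univ.filter (fun i => i < j ∧ cross a b i j ≠ 0)).image (fun i => pt a b c i j)

open Classical in
lemma newpts_castSucc (a b c : Fin (d+1) → F) (j : Fin d) :
    newpts (fun i => a i.castSucc) (fun i => b i.castSucc) (fun i => c i.castSucc) j
      = newpts a b c j.castSucc := by
  unfold newpts
  ext q
  simp only [Finset.mem_image, Finset.mem_filter, Finset.mem_univ, true_and]
  constructor
  · rintro ⟨i, ⟨hij, hc⟩, rfl⟩
    exact ⟨i.castSucc, ⟨Fin.castSucc_lt_castSucc_iff.2 hij, hc⟩, rfl⟩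
  · rintro ⟨i, ⟨hij, hc⟩, rfl⟩
    have hne : i ≠ Fin.last d := ne_of_lt (lt_trans hij (Fin.castSucc_lt_last j))
    obtain ⟨i', rfl⟩ := Fin.exists_castSucc_eq.2 hne
    exact ⟨i', ⟨Fin.castSucc_lt_castSucc_iff.1 hij, hc⟩, rfl⟩

lemma param_exists (u v w : F) (hn : u^2 + v^2 ≠ 0) (q : F × F)
    (hq : u * q.1 + v * q.2 - w = 0) :
    ∃ t : F, q = (u * w / (u^2+v^2) - t * v, v * w / (u^2+v^2) + t * u) := by
  refine ⟨(-v * q.1 + u * q.2) / (u^2+v^2), ?_⟩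
  have h1 : q.1 = u * w / (u^2+v^2) - (-v * q.1 + u * q.2) / (u^2+v^2) * v := by
    field_simp
    linear_combination u * hq
  have h2 : q.2 = v * w / (u^2+v^2) + (-v * q.1 + u * q.2) / (u^2+v^2) * u := by
    field_simp
    linear_combination v * hq
  exact Prod.ext h1 h2

open Classical in
theorem main : ∀ (d : ℕ) (a b c : Fin d → F),
    (∀ i, (a i, b i) ≠ (0,0)) →
    (∀ i j, {p : F × F | arrLine a b c i p = 0} = {p : F × F | arrLine a b c j p = 0} → i = j) →
    (Finset.univ.filter (fun ε : Fin d → Bool => (arrRegion a b c ε).Nonempty)).card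
      = 1 + d + ∑ j, (newpts a b c j).card := by
  intro d
  induction d with
  | zero =>
      intro a b c _ _
      rw [Finset.filter_true_of_mem (fun ε _ => ⟨(0,0), fun i => i.elim0⟩), Finset.card_univ]
      simp
  | succ d ih =>
      intro a b c hnd hdist
      set la : Fin (d+1) := Fin.last d with hla
      set a' : Fin d → F := fun i => a i.castSucc with ha'
      set b' : Fin d → F := fun i => b i.castSucc with hb'
      set c' : Fin d → F := fun i => c i.castSucc with hc'
      have hnd' : ∀ i : Fin d, (a' i, b' i) ≠ (0,0) := fun i => hnd _
      have hdist' : ∀ i j : Fin d,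
          {p : F × F | arrLine a' b' c' i p = 0} = {p : F × F | arrLine a' b' c' j p = 0} → i = j :=
        fun i j h => Fin.castSucc_injective d (hdist _ _ h)
      have hab : a la ≠ 0 ∨ b la ≠ 0 := by
        have := hnd la
        by_contra hcon
        push_neg at hcon
        exact this (by rw [hcon.1, hcon.2])
      have hnpos : 0 < a la ^ 2 + b la ^ 2 := by
        rcases hab with h | h
        · have h1 : 0 < a la ^ 2 := by positivity
          have h2 : 0 ≤ b la ^ 2 := sq_nonneg _
          linarith
        · have h1 : 0 < b la ^ 2 := by positivity
          have h2 : 0 ≤ a la ^ 2 := sq_nonneg _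
          linarith
      have hnne : a la ^ 2 + b la ^ 2 ≠ 0 := ne_of_gt hnpos
      set P0 : F × F := (a la * c la / (a la ^ 2 + b la ^ 2),
        b la * c la / (a la ^ 2 + b la ^ 2)) with hP0
      set pm : F → F × F := fun t => (P0.1 - t * b la, P0.2 + t * a la) with hpm
      set α : Fin d → F := fun i => arrLine a b c i.castSucc P0 with hα
      set δ : Fin d → F := fun i => b i.castSucc * a la - a i.castSucc * b la with hδ
      have hgP0 : arrLine a b c la P0 = 0 := by
        rw [hP0]; simp only [arrLine]; field_simp; ring
      have hgpm : ∀ t, arrLine a b c la (pm t) = 0 := by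
        intro t
        have : arrLine a b c la (pm t) = arrLine a b c la P0 := by
          simp only [arrLine, hpm]; ring
        rw [this, hgP0]
      have hline : ∀ (i : Fin d) (t : F), arrLine a b c i.castSucc (pm t) = α i + t * δ i := by
        intro i t
        simp only [arrLine, hpm, hα, hδ]; ring
      have hcrossδ : ∀ i : Fin d, cross a b i.castSucc la = - δ i := by
        intro i; simp only [cross, hδ]; ring
      have h0 : ∀ i, δ i = 0 → α i ≠ 0 := by
        intro i hdi hai
        have hpar : cross a b i.castSucc la = 0 := by rw [hcrossδ i, hdi, neg_zero]
        have := parallel_eq a b c hnd hdist hpar hai hgP0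
        exact absurd this (ne_of_lt (Fin.castSucc_lt_last i))
      -- region split
      have hsplit : ∀ (ε : Fin (d+1) → Bool) (p : F × F),
          p ∈ arrRegion a b c ε ↔ (p ∈ arrRegion a' b' c' (Fin.init ε) ∧
            0 < (if ε la then (1:F) else -1) * arrLine a b c la p) := by
        intro ε p
        constructor
        · intro h; exact ⟨fun i => h i.castSucc, h la⟩
        · rintro ⟨h1, h2⟩ i
          refine Fin.lastCases ?_ ?_ i
          · exact h2
          · intro j; exact h1 j
      set E1 := Finset.univ.filter (fun ε : Fin (d+1) → Bool => (arrRegion a b c ε).Nonempty) with hE1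
      set E0 := Finset.univ.filter (fun ε : Fin d → Bool => (arrRegion a' b' c' ε).Nonempty) with hE0
      set meets : (Fin d → Bool) → Prop :=
        fun ε' => ∃ p ∈ arrRegion a' b' c' ε', arrLine a b c la p = 0 with hmeets
      -- fiber counting
      have hgval : ∀ (x : F × F) (e' : F), arrLine a b c la (x.1 + e' * a la, x.2 + e' * b la)
          = arrLine a b c la x + e' * (a la ^ 2 + b la ^ 2) := by
        intro x e'; simp only [arrLine]; ring
      have hsnoc_la : ∀ (ε' : Fin d → Bool) (s : Bool), (Fin.snoc ε' s : Fin (d+1) → Bool) la = s := by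
        intro ε' s; rw [hla]; exact Fin.snoc_last _ _
      have hfiber : ∀ ε' ∈ E0, (E1.filter (fun ε => Fin.init ε = ε')).card
          = if meets ε' then 2 else 1 := by
        intro ε' hε'
        obtain ⟨-, w0, hw0⟩ := Finset.mem_filter.1 hε'
        by_cases hm : meets ε'
        · rw [if_pos hm]
          obtain ⟨x, hx, hgx⟩ := hm
          obtain ⟨e, hepos, hmove⟩ := perturb a' b' c' ε' hx (a la) (b la)
          have hT : Fin.snoc ε' true ∈ E1 := by
            have hmem' := hmove e (by rw [abs_of_pos hepos])
            refine Finset.mem_filter.2 ⟨Finset.mem_univ _,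
              ⟨(x.1 + e * a la, x.2 + e * b la), ?_⟩⟩
            apply (hsplit _ _).2
            refine ⟨by rw [Fin.init_snoc]; exact hmem', ?_⟩
            rw [hsnoc_la ε' true, hgval x e, hgx, zero_add]
            simp only [if_pos]
            rw [one_mul]
            exact mul_pos hepos hnpos
          have hF : Fin.snoc ε' false ∈ E1 := by
            have habs : |(-e)| ≤ e := by rw [abs_neg, abs_of_pos hepos]
            have hmem' := hmove (-e) habs
            refine Finset.mem_filter.2 ⟨Finset.mem_univ _,
              ⟨(x.1 + -e * a la, x.2 + -e * b la), ?_⟩⟩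
            apply (hsplit _ _).2
            refine ⟨by rw [Fin.init_snoc]; exact hmem', ?_⟩
            rw [hsnoc_la ε' false, hgval x (-e), hgx, zero_add]
            have : (if (false : Bool) then (1:F) else -1) * (-e * (a la ^ 2 + b la ^ 2))
                = e * (a la ^ 2 + b la ^ 2) := by norm_num
            rw [this]
            exact mul_pos hepos hnpos
          have hset : E1.filter (fun ε => Fin.init ε = ε')
              = {Fin.snoc ε' true, Fin.snoc ε' false} := by
            ext ε
            simp only [Finset.mem_filter, Finset.mem_insert, Finset.mem_singleton]
            constructor
            · rintro ⟨hεE, hinit⟩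
              have hεsn : ε = Fin.snoc ε' (ε (Fin.last d)) := by
                rw [← hinit]; exact (Fin.snoc_init_self ε).symm
              cases hb : ε (Fin.last d)
              · right; rw [hεsn, hb]
              · left; rw [hεsn, hb]
            · rintro (rfl | rfl)
              · exact ⟨hT, Fin.init_snoc _ _⟩
              · exact ⟨hF, Fin.init_snoc _ _⟩
          rw [hset, Finset.card_insert_of_notMem, Finset.card_singleton]
          simp only [Finset.mem_singleton]
          intro hcon
          have hcf := congrFun hcon (Fin.last d)
          simp only [Fin.snoc_last] at hcf
          exact absurd hcf (by simp)
        · rw [if_neg hm]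
          have hgw : arrLine a b c la w0 ≠ 0 := fun h => hm ⟨w0, hw0, h⟩
          set s0 : Bool := decide (0 < arrLine a b c la w0) with hs0
          have hwmem : Fin.snoc ε' s0 ∈ E1 := by
            refine Finset.mem_filter.2 ⟨Finset.mem_univ _, ⟨w0, ?_⟩⟩
            apply (hsplit _ _).2
            refine ⟨by rw [Fin.init_snoc]; exact hw0, ?_⟩
            rw [hsnoc_la ε' s0]
            exact (sg_iff hgw).2 hs0
          have hset : E1.filter (fun ε => Fin.init ε = ε') = {Fin.snoc ε' s0} := by
            ext ε
            simp only [Finset.mem_filter, Finset.mem_singleton]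
            constructor
            · rintro ⟨hεE, hinit⟩
              have hεsn : ε = Fin.snoc ε' (ε (Fin.last d)) := by
                rw [← hinit]; exact (Fin.snoc_init_self ε).symm
              obtain ⟨p, hp⟩ := (Finset.mem_filter.1 hεE).2
              obtain ⟨hp1, hp2⟩ := (hsplit ε p).1 hp
              rw [hinit] at hp1
              have hgp : arrLine a b c la p ≠ 0 := fun h => hm ⟨p, hp1, h⟩
              have hsame : (0 < arrLine a b c la p) ↔ (0 < arrLine a b c la w0) := by
                constructor
                · intro h1
                  by_contra h2
                  have h3 : arrLine a b c la w0 < 0 := lt_of_le_of_ne (not_lt.1 h2) hgw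
                  obtain ⟨z, hz, hz0⟩ := ivt_region a' b' c' ε' (a la) (b la) (c la)
                    hw0 hp1 h3 h1
                  exact hm ⟨z, hz, hz0⟩
                · intro h1
                  by_contra h2
                  have h3 : arrLine a b c la p < 0 := lt_of_le_of_ne (not_lt.1 h2) hgp
                  obtain ⟨z, hz, hz0⟩ := ivt_region a' b' c' ε' (a la) (b la) (c la)
                    hp1 hw0 h3 h1
                  exact hm ⟨z, hz, hz0⟩
              have h5 : ε la = decide (0 < arrLine a b c la p) := (sg_iff hgp).1 hp2
              have hεla : ε (Fin.last d) = s0 := by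
                rw [← hla, h5, hs0]
                simp only [decide_eq_decide]
                exact hsame
              rw [hεsn, hεla]
            · rintro rfl
              exact ⟨hwmem, Fin.init_snoc _ _⟩
          rw [hset, Finset.card_singleton]
      have hstepA : E1.card = E0.card + (E0.filter meets).card := by
        rw [Finset.card_eq_sum_card_fiberwise (f := Fin.init) (t := E0) ?mapsto]
        case mapsto =>
          intro ε hε
          obtain ⟨p, hp⟩ := (Finset.mem_filter.1 hε).2
          exact Finset.mem_filter.2 ⟨Finset.mem_univ _, ⟨p, ((hsplit ε p).1 hp).1⟩⟩
        have he : ∀ ε' ∈ E0, (E1.filter (fun ε => Fin.init ε = ε')).card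
            = 1 + (if meets ε' then 1 else 0) := by
          intro ε' hε'
          rw [hfiber ε' hε']
          rcases Classical.em (meets ε') with h | h
          · rw [if_pos h, if_pos h]
          · rw [if_neg h, if_neg h]
        rw [Finset.sum_congr rfl he, Finset.sum_add_distrib, Finset.sum_const, smul_eq_mul,
          mul_one]
        congr 1
        rw [Finset.card_filter]
      have hval_ne : ∀ (ε' : Fin d → Bool) (p : F × F) (i : Fin d),
          p ∈ arrRegion a' b' c' ε' → arrLine a' b' c' i p ≠ 0 := by
        intro ε' p i hp hz
        have h1 := hp i
        rw [hz, mul_zero] at h1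
        exact lt_irrefl 0 h1
      have hstepB : (E0.filter meets) = Finset.univ.filter (fun ε' : Fin d → Bool =>
          ∃ t : F, (∀ i, α i + t * δ i ≠ 0) ∧ ∀ i, ε' i = decide (0 < α i + t * δ i)) := by
        ext ε'
        constructor
        · intro h
          obtain ⟨hε'0, x, hx, hgx⟩ := Finset.mem_filter.1 h
          obtain ⟨t, hxt⟩ := param_exists (a la) (b la) (c la) hnne x hgx
          have hx_pm : x = pm t := hxt
          refine Finset.mem_filter.2 ⟨Finset.mem_univ _, t, ?_, ?_⟩
          · intro i
            rw [← hline i t, ← hx_pm]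
            exact hval_ne ε' x i hx
          · intro i
            have hne := hval_ne ε' x i hx
            rw [← hline i t, ← hx_pm]
            exact (sg_iff hne).1 (hx i)
        · intro h
          obtain ⟨-, t, hval, hsg⟩ := Finset.mem_filter.1 h
          have hmem : pm t ∈ arrRegion a' b' c' ε' := by
            intro i
            have hne : arrLine a' b' c' i (pm t) ≠ 0 := by
              rw [show arrLine a' b' c' i (pm t) = α i + t * δ i from hline i t]
              exact hval i
            apply (sg_iff hne).2
            rw [show arrLine a' b' c' i (pm t) = α i + t * δ i from hline i t]
            exact hsg i
          exact Finset.mem_filter.2 ⟨Finset.mem_filter.2 ⟨Finset.mem_univ _, ⟨pm t, hmem⟩⟩,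
            ⟨pm t, hmem, hgpm t⟩⟩
      have hstepC : (cuts α δ).card = (newpts a b c la).card := by
        apply Finset.card_bij (i := fun t _ => pm t)
        · intro t ht
          simp only [cuts, Finset.mem_image, Finset.mem_filter, Finset.mem_univ, true_and] at ht
          obtain ⟨i, hdi, rfl⟩ := ht
          have hcr : cross a b i.castSucc la ≠ 0 := by
            rw [hcrossδ i]; exact neg_ne_zero.2 hdi
          have hon1 : arrLine a b c i.castSucc (pm (-α i / δ i)) = 0 := by
            rw [hline]; field_simp; ring
          have hon2 := hgpm (-α i / δ i)
          have hpt := pt_unique a b c hcr hon1 hon2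
          unfold newpts
          rw [Finset.mem_image]
          exact ⟨i.castSucc, Finset.mem_filter.2 ⟨Finset.mem_univ _,
            ⟨Fin.castSucc_lt_last i, hcr⟩⟩, hpt.symm⟩
        · intro t1 h1 t2 h2 he
          have e1 : P0.1 - t1 * b la = P0.1 - t2 * b la := congrArg Prod.fst he
          have e2 : P0.2 + t1 * a la = P0.2 + t2 * a la := congrArg Prod.snd he
          rcases hab with h | h
          · have h3 : t1 * a la = t2 * a la := by
              have := e2; linarith
            exact mul_right_cancel₀ h h3
          · have h3 : t1 * b la = t2 * b la := by
              have := e1; linarith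
            exact mul_right_cancel₀ h h3
        · intro q hq
          unfold newpts at hq
          rw [Finset.mem_image] at hq
          obtain ⟨i', hi', rfl⟩ := hq
          obtain ⟨-, hlt, hcr⟩ := Finset.mem_filter.1 hi'
          have hne : i' ≠ la := ne_of_lt hlt
          obtain ⟨i, rfl⟩ := Fin.exists_castSucc_eq.2 hne
          have hon := pt_mem a b c (i := i.castSucc) (j := la) hcr
          obtain ⟨t, hqt⟩ := param_exists (a la) (b la) (c la) hnne _ hon.2
          have hq_pm : pt a b c i.castSucc la = pm t := hqt
          have hδi : δ i ≠ 0 := by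
            intro hz
            rw [hcrossδ i, hz, neg_zero] at hcr
            exact hcr rfl
          have hαt : α i + t * δ i = 0 := by
            rw [← hline i t, ← hq_pm]; exact hon.1
          have ht : t = -α i / δ i := by
            field_simp
            linear_combination hαt
          refine ⟨t, ?_, hq_pm.symm⟩
          simp only [cuts, Finset.mem_image, Finset.mem_filter, Finset.mem_univ, true_and]
          exact ⟨i, hδi, ht.symm⟩
      have hsum : ∑ j : Fin (d+1), (newpts a b c j).card
          = ∑ j : Fin d, (newpts a' b' c' j).card + (newpts a b c la).card := by
        rw [Fin.sum_univ_castSucc]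
        congr 1
        apply Finset.sum_congr rfl
        intro j _
        rw [newpts_castSucc a b c j]
      have hih := ih a' b' c' hnd' hdist'
      rw [hstepA, hstepB, oneD α δ h0, hstepC, hih, hsum]
      ring

lemma choose2 (n : ℕ) : 2 * n.choose 2 + n = n * n := by
  induction n with
  | zero => rfl
  | succ n ih =>
      rw [Nat.choose_succ_succ, Nat.choose_one_right]
      ring_nf
      ring_nf at ih
      omega

end LineFold

open LineFold in
theorem count_regions_of_line_fold'
    {F : Type*} [Field F] [LinearOrder F] [IsStrictOrderedRing F] (d : ℕ) (hd : 1 ≤ d)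
    (a b c : Fin d → F)
    (hnd : ∀ i : Fin d, (a i, b i) ≠ (0, 0))
    (hdistinct : ∀ i j : Fin d,
      {p : F × F | arrLine a b c i p = 0} = {p : F × F | arrLine a b c j p = 0} → i = j)
    (P : Finset (F × F))
    (hP : ∀ p : F × F, p ∈ P ↔
      ∃ i j : Fin d, i ≠ j ∧ arrLine a b c i p = 0 ∧ arrLine a b c j p = 0)
    (r : ℕ) (cls : Fin d → Fin r)
    (hclsSurj : Function.Surjective cls)
    (hcls : ∀ i j : Fin d, cls i = cls j ↔ a i * b j = a j * b i) :
    (Nat.card {ε : Fin d → Bool // (arrRegion a b c ε).Nonempty} : ℤ)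
      = 1 + (d : ℤ) + (d.choose 2 : ℤ)
        - ∑ p ∈ P, ((Nat.card {i : Fin d // arrLine a b c i p = 0} - 1).choose 2 : ℤ)
        - ∑ t : Fin r, ((Nat.card {i : Fin d // cls i = t}).choose 2 : ℤ) := by
  classical
  -- notation
  set Lp : F × F → Finset (Fin d) :=
    fun p => Finset.univ.filter (fun i => arrLine a b c i p = 0) with hLp
  set Ct : Fin r → Finset (Fin d) :=
    fun t => Finset.univ.filter (fun i => cls i = t) with hCt
  have hcross_of : ∀ (i j : Fin d) (p : F × F), i ≠ j → arrLine a b c i p = 0 →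
      arrLine a b c j p = 0 → cross a b i j ≠ 0 ∧ pt a b c i j = p := by
    intro i j p hij hi hj
    have hc : cross a b i j ≠ 0 := fun hc => hij (parallel_eq a b c hnd hdistinct hc hi hj)
    exact ⟨hc, (pt_unique a b c hc hi hj).symm⟩
  have hLpmem : ∀ (p : F × F) (i : Fin d), i ∈ Lp p ↔ arrLine a b c i p = 0 := by
    intro p i; rw [hLp]; simp
  have hPne : ∀ p ∈ P, (Lp p).Nonempty := by
    intro p hp
    obtain ⟨i, j, hij, hi, hj⟩ := (hP p).1 hp
    exact ⟨i, (hLpmem p i).2 hi⟩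
  have hPtwo : ∀ p ∈ P, 2 ≤ (Lp p).card := by
    intro p hp
    obtain ⟨i, j, hij, hi, hj⟩ := (hP p).1 hp
    have : {i, j} ⊆ Lp p := by
      intro k hk
      rcases Finset.mem_insert.1 hk with rfl | hk
      · exact (hLpmem p k).2 hi
      · rw [Finset.mem_singleton.1 hk]
        exact (hLpmem p j).2 hj
    calc 2 = ({i, j} : Finset (Fin d)).card := by
          rw [Finset.card_insert_of_notMem (by simpa using hij), Finset.card_singleton]
    _ ≤ _ := Finset.card_le_card this
  -- main count in terms of newpts
  have hmain := main d a b c hnd hdistinct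
  -- newpts sum = sum over P of (k_p - 1)
  have hN1 : ∑ j : Fin d, (newpts a b c j).card = ∑ p ∈ P, ((Lp p).card - 1) := by
    rw [← Finset.card_sigma]
    rw [Finset.card_eq_sum_card_fiberwise (f := fun x => x.2) (t := P) ?mapsto]
    case mapsto =>
      intro x hx
      obtain ⟨-, hx2⟩ := Finset.mem_sigma.1 hx
      unfold newpts at hx2
      rw [Finset.mem_image] at hx2
      obtain ⟨i, hi, hpt⟩ := hx2
      obtain ⟨-, hlt, hcr⟩ := Finset.mem_filter.1 hi
      have hon := pt_mem a b c hcr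
      show x.snd ∈ P
      rw [hP]
      exact ⟨i, x.1, ne_of_lt hlt, by rw [← hpt]; exact hon.1, by rw [← hpt]; exact hon.2⟩
    apply Finset.sum_congr rfl
    intro p hp
    have hbij : ((Finset.univ.sigma (fun j => newpts a b c j)).filter
          (fun x => x.2 = p)).card
        = ((Lp p).erase ((Lp p).min' (hPne p hp))).card := by
      apply Finset.card_bij (i := fun x _ => x.1)
      · intro x hx
        obtain ⟨hx0, hxp⟩ := Finset.mem_filter.1 hx
        obtain ⟨-, hx2⟩ := Finset.mem_sigma.1 hx0
        unfold newpts at hx2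
        rw [Finset.mem_image] at hx2
        obtain ⟨i, hi, hpt⟩ := hx2
        obtain ⟨-, hlt, hcr⟩ := Finset.mem_filter.1 hi
        have hon := pt_mem a b c hcr
        rw [hxp] at hpt
        rw [Finset.mem_erase]
        constructor
        · have himem : i ∈ Lp p := (hLpmem p i).2 (by rw [← hpt]; exact hon.1)
          intro he
          have hle := Finset.min'_le (Lp p) i himem
          rw [← he] at hle
          exact absurd hlt (not_lt.2 hle)
        · exact (hLpmem p x.1).2 (by rw [← hpt]; exact hon.2)
      · rintro ⟨j1, q1⟩ h1 ⟨j2, q2⟩ h2 he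
        have hq1 : q1 = p := (Finset.mem_filter.1 h1).2
        have hq2 : q2 = p := (Finset.mem_filter.1 h2).2
        simp only at he
        subst he
        simp [hq1, hq2]
      · intro j hj
        obtain ⟨hjne, hjL⟩ := Finset.mem_erase.1 hj
        have hi0m : (Lp p).min' (hPne p hp) ∈ Lp p := (Lp p).min'_mem _
        have hi0lt : (Lp p).min' (hPne p hp) < j :=
          lt_of_le_of_ne (Finset.min'_le _ _ hjL) (Ne.symm hjne)
        have hcp := hcross_of _ j p (ne_of_lt hi0lt)
          ((hLpmem p _).1 hi0m) ((hLpmem p j).1 hjL)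
        refine ⟨⟨j, p⟩, ?_, rfl⟩
        apply Finset.mem_filter.2
        refine ⟨Finset.mem_sigma.2 ⟨Finset.mem_univ _, ?_⟩, rfl⟩
        unfold newpts
        rw [Finset.mem_image]
        exact ⟨_, Finset.mem_filter.2 ⟨Finset.mem_univ _, hi0lt, hcp.1⟩, hcp.2⟩
    rw [hbij, Finset.card_erase_of_mem ((Lp p).min'_mem _)]
  -- pairs identity
  have hN2 : ((Finset.univ : Finset (Fin d)).offDiag).card
      = ∑ t : Fin r, (Ct t).offDiag.card + ∑ p ∈ P, (Lp p).offDiag.card := by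
    have hsplit2 := Finset.card_filter_add_card_filter_not
      (s := (Finset.univ : Finset (Fin d)).offDiag)
      (p := fun ij => cross a b ij.1 ij.2 = 0)
    have hQp : ((Finset.univ : Finset (Fin d)).offDiag.filter
          (fun ij => cross a b ij.1 ij.2 = 0)).card
        = ∑ t : Fin r, (Ct t).offDiag.card := by
      rw [Finset.card_eq_sum_card_fiberwise (f := fun ij => cls ij.1)
        (t := Finset.univ) (fun _ _ => Finset.mem_univ _)]
      apply Finset.sum_congr rfl
      intro t _
      congr 1
      ext ij
      rw [Finset.mem_filter, Finset.mem_filter, Finset.mem_offDiag, Finset.mem_offDiag]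
      constructor
      · rintro ⟨⟨⟨-, -, hne⟩, hcr⟩, hct⟩
        have hcc : cls ij.1 = cls ij.2 := (hcls ij.1 ij.2).2 (by
          have := hcr
          unfold cross at this
          linarith [this])
        refine ⟨(hCt ▸ ?_), (hCt ▸ ?_), hne⟩
        · simp only [Finset.mem_filter]; exact ⟨Finset.mem_univ _, hct⟩
        · simp only [Finset.mem_filter]; exact ⟨Finset.mem_univ _, hcc ▸ hct⟩
      · rintro ⟨h1, h2, hne⟩
        rw [hCt] at h1 h2
        simp only [Finset.mem_filter] at h1 h2
        have hcc : cls ij.1 = cls ij.2 := by rw [h1.2, h2.2]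
        have hcr : cross a b ij.1 ij.2 = 0 := by
          unfold cross
          have := (hcls ij.1 ij.2).1 hcc
          linarith
        exact ⟨⟨⟨Finset.mem_univ _, Finset.mem_univ _, hne⟩, hcr⟩, h1.2⟩
    have hQc : ((Finset.univ : Finset (Fin d)).offDiag.filter
          (fun ij => ¬ cross a b ij.1 ij.2 = 0)).card
        = ∑ p ∈ P, (Lp p).offDiag.card := by
      rw [Finset.card_eq_sum_card_fiberwise (f := fun ij => pt a b c ij.1 ij.2)
        (t := P) ?mt]
      case mt =>
        intro ij hij
        obtain ⟨hod, hcr⟩ := Finset.mem_filter.1 hij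
        obtain ⟨-, -, hne⟩ := Finset.mem_offDiag.1 hod
        have hon := pt_mem a b c hcr
        show pt a b c ij.1 ij.2 ∈ P
        rw [hP]
        exact ⟨ij.1, ij.2, hne, hon.1, hon.2⟩
      apply Finset.sum_congr rfl
      intro p hp
      congr 1
      ext ij
      constructor
      · intro hij
        obtain ⟨h1, hptp⟩ := Finset.mem_filter.1 hij
        obtain ⟨hod, hcr⟩ := Finset.mem_filter.1 h1
        obtain ⟨-, -, hne⟩ := Finset.mem_offDiag.1 hod
        have hon := pt_mem a b c hcr
        rw [Finset.mem_offDiag]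
        exact ⟨(hLpmem p ij.1).2 (by rw [← hptp]; exact hon.1),
               (hLpmem p ij.2).2 (by rw [← hptp]; exact hon.2), hne⟩
      · intro hij
        obtain ⟨h1, h2, hne⟩ := Finset.mem_offDiag.1 hij
        have hcp := hcross_of ij.1 ij.2 p hne ((hLpmem p ij.1).1 h1) ((hLpmem p ij.2).1 h2)
        exact Finset.mem_filter.2 ⟨Finset.mem_filter.2
          ⟨Finset.mem_offDiag.2 ⟨Finset.mem_univ _, Finset.mem_univ _, hne⟩, hcp.1⟩, hcp.2⟩
    rw [← hsplit2, hQp, hQc]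
  -- Nat.card conversions
  have hNcard : Nat.card {ε : Fin d → Bool // (arrRegion a b c ε).Nonempty}
      = (Finset.univ.filter (fun ε : Fin d → Bool => (arrRegion a b c ε).Nonempty)).card := by
    rw [Nat.card_eq_fintype_card, Fintype.card_subtype]
  have hkcard : ∀ p : F × F, Nat.card {i : Fin d // arrLine a b c i p = 0} = (Lp p).card := by
    intro p
    rw [Nat.card_eq_fintype_card, Fintype.card_subtype, hLp]
  have hlcard : ∀ t : Fin r, Nat.card {i : Fin d // cls i = t} = (Ct t).card := by
    intro t
    rw [Nat.card_eq_fintype_card, Fintype.card_subtype, hCt]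
  have key : ∀ n : ℕ, 2 * (n.choose 2 : ℤ) = n * n - n := by
    intro n
    have h := choose2 n
    zify at h
    linarith
  have hod : ∀ s : Finset (Fin d), ((s.offDiag.card : ℕ) : ℤ)
      = (s.card : ℤ) * s.card - s.card := by
    intro s
    rw [Finset.offDiag_card]
    have hle : s.card ≤ s.card * s.card := by
      rcases Nat.eq_zero_or_pos s.card with h | h
      · rw [h]
      · exact Nat.le_mul_of_pos_left _ h
    rw [Nat.cast_sub hle, Nat.cast_mul]
  have hpairZ : (d : ℤ) * d - d
      = ∑ t : Fin r, (((Ct t).card : ℤ) * (Ct t).card - ((Ct t).card : ℤ))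
        + ∑ p ∈ P, (((Lp p).card : ℤ) * (Lp p).card - ((Lp p).card : ℤ)) := by
    calc (d:ℤ)*d - d = ((Finset.univ : Finset (Fin d)).offDiag.card : ℤ) := by
          rw [hod, Finset.card_univ, Fintype.card_fin]
    _ = ((∑ t : Fin r, (Ct t).offDiag.card + ∑ p ∈ P, (Lp p).offDiag.card : ℕ) : ℤ) := by
          rw [hN2]
    _ = _ := by
          push_cast
          rw [Finset.sum_congr rfl (fun t _ => hod (Ct t)),
            Finset.sum_congr rfl (fun p _ => hod (Lp p))]
  have hsubc : ∀ p ∈ P, (((Lp p).card - 1 : ℕ) : ℤ) = ((Lp p).card : ℤ) - 1 := by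
    intro p hp
    have h1 : 1 ≤ (Lp p).card := le_trans one_le_two (hPtwo p hp)
    rw [Nat.cast_sub h1, Nat.cast_one]
  have hcountZ : ((Finset.univ.filter
        (fun ε : Fin d → Bool => (arrRegion a b c ε).Nonempty)).card : ℤ)
      = 1 + (d:ℤ) + ∑ p ∈ P, (((Lp p).card : ℤ) - 1) := by
    rw [hmain, hN1]
    push_cast
    rw [Finset.sum_congr rfl hsubc]
  have hchooseP : 2 * ∑ p ∈ P,
        ((Nat.card {i : Fin d // arrLine a b c i p = 0} - 1).choose 2 : ℤ)
      = ∑ p ∈ P, ((((Lp p).card:ℤ) - 1) * (((Lp p).card:ℤ) - 1) - (((Lp p).card:ℤ) - 1)) := by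
    rw [Finset.mul_sum]
    apply Finset.sum_congr rfl
    intro p hp
    rw [hkcard p, key ((Lp p).card - 1), hsubc p hp]
  have hchooseT : 2 * ∑ t : Fin r, ((Nat.card {i : Fin d // cls i = t}).choose 2 : ℤ)
      = ∑ t : Fin r, (((Ct t).card:ℤ) * (Ct t).card - ((Ct t).card:ℤ)) := by
    rw [Finset.mul_sum]
    apply Finset.sum_congr rfl
    intro t _
    rw [hlcard t, key ((Ct t).card)]
  have hS1 : ∑ p ∈ P, (((Lp p).card:ℤ) * (Lp p).card - ((Lp p).card:ℤ))
      - ∑ p ∈ P, ((((Lp p).card:ℤ) - 1) * (((Lp p).card:ℤ) - 1) - (((Lp p).card:ℤ) - 1))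
      = 2 * ∑ p ∈ P, (((Lp p).card:ℤ) - 1) := by
    rw [← Finset.sum_sub_distrib, Finset.mul_sum]
    apply Finset.sum_congr rfl
    intro p _
    ring
  rw [hNcard, hcountZ]
  have hd2 := key d
  linarith [hchooseP, hchooseT, hS1, hpairZ, hd2]

/-- Count of regions of a line-fold (parallel lines and concurrencies allowed): for `d`
distinct lines, `P` the set of points on at least two lines, `k_p` the number of lines
through `p ∈ P`, and `cls` the assignment of parallel classes, the number of regions is
`1 + d + C(d,2) - Σ_{p ∈ P} C(k_p - 1, 2) - Σ_t C(l_t, 2)` where `l_t` is the size of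
the `t`-th parallel class.  (This counts the regions of the complement of the zero set
of a polynomial in two variables that factors completely into linear factors, `d` being
the degree of its reduced polynomial.) -/
theorem count_regions_of_line_fold
    {F : Type*} [Field F] [LinearOrder F] [IsStrictOrderedRing F] (d : ℕ) (hd : 1 ≤ d)
    (a b c : Fin d → F)
    (hnd : ∀ i : Fin d, (a i, b i) ≠ (0, 0))
    (hdistinct : ∀ i j : Fin d,
      {p : F × F | arrLine a b c i p = 0} = {p : F × F | arrLine a b c j p = 0} → i = j)
    (P : Finset (F × F))
    (hP : ∀ p : F × F, p ∈ P ↔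
      ∃ i j : Fin d, i ≠ j ∧ arrLine a b c i p = 0 ∧ arrLine a b c j p = 0)
    (r : ℕ) (cls : Fin d → Fin r)
    (hclsSurj : Function.Surjective cls)
    (hcls : ∀ i j : Fin d, cls i = cls j ↔ a i * b j = a j * b i) :
    (Nat.card {ε : Fin d → Bool // (arrRegion a b c ε).Nonempty} : ℤ)
      = 1 + (d : ℤ) + (d.choose 2 : ℤ)
        - ∑ p ∈ P, ((Nat.card {i : Fin d // arrLine a b c i p = 0} - 1).choose 2 : ℤ)
        - ∑ t : Fin r, ((Nat.card {i : Fin d // cls i = t}).choose 2 : ℤ) :=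
  count_regions_of_line_fold' d hd a b c hnd hdistinct P hP r cls hclsSurj hcls
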